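/- Let γ ∈ (0,1), K a bounded γ-Hölder probability density on ℝ^d, and F : ℝ → ℝ with F′ bounded and Lipschitz (equivalently, F ∈ C² with F′, F″ bounded suffices). Then there exists C depending on F and K such that for all bounded γ-Hölder functions f, g ∈ L¹(ℝ^d): ‖F(K*f) − F(K*g)‖_{C^γ} ≤ C (1 + ‖f+g‖_{L¹}) ‖f − g‖_{C^γ}. -/

import Mathlib

open MeasureTheory Real Filter

abbrev Euc (d : ℕ) := EuclideanSpace ℝ (Fin d)

noncomputable def supN {E : Type*} (f : E → ℝ) : ℝ := ⨆ x, |f x|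

noncomputable def holdS {E : Type*} [NormedAddCommGroup E] (γ : ℝ) (f : E → ℝ) : ℝ :=
  ⨆ p : E × E, |f p.1 - f p.2| / ‖p.1 - p.2‖ ^ γ

noncomputable def cNorm {E : Type*} [NormedAddCommGroup E] (γ : ℝ) (f : E → ℝ) : ℝ :=
  supN f + holdS γ f

def IsHolderBdd {E : Type*} [NormedAddCommGroup E] (γ : ℝ) (f : E → ℝ) : Prop :=
  BddAbove (Set.range fun x => |f x|) ∧
  BddAbove (Set.range fun p : E × E => |f p.1 - f p.2| / ‖p.1 - p.2‖ ^ γ)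

lemma aux_div_le {a c r : ℝ} (ha : 0 ≤ a) (hc : 0 ≤ c) (hr : 0 ≤ r)
    (h : a ≤ c * r) : a / r ≤ c := by
  rcases hr.eq_or_lt with h0 | h0
  · simp [← h0, hc]
  · exact (div_le_iff₀ h0).mpr h

lemma holder_pt {E : Type*} [NormedAddCommGroup E] {γ : ℝ} (hγ : 0 < γ) {f : E → ℝ}
    (hf : BddAbove (Set.range fun p : E × E => |f p.1 - f p.2| / ‖p.1 - p.2‖ ^ γ))
    (x y : E) : |f x - f y| ≤ holdS γ f * ‖x - y‖ ^ γ := by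
  by_cases hxy : x = y
  · subst hxy; simp [Real.zero_rpow hγ.ne']
  · have hn : (0:ℝ) < ‖x - y‖ := by
      simpa using norm_pos_iff.mpr (sub_ne_zero.mpr hxy)
    have hr : (0:ℝ) < ‖x - y‖ ^ γ := Real.rpow_pos_of_pos hn γ
    have := le_ciSup hf (x, y)
    exact (div_le_iff₀ hr).mp this

lemma holds_nonneg {E : Type*} [NormedAddCommGroup E] [Nonempty E] {γ : ℝ} {f : E → ℝ}
    (hf : BddAbove (Set.range fun p : E × E => |f p.1 - f p.2| / ‖p.1 - p.2‖ ^ γ)) :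
    0 ≤ holdS γ f := by
  obtain ⟨x⟩ := ‹Nonempty E›
  refine le_trans ?_ (le_ciSup hf (x, x))
  simp

lemma cont_of_holder {E : Type*} [NormedAddCommGroup E] {γ : ℝ} (hγ : 0 < γ) {f : E → ℝ}
    {c : ℝ} (h : ∀ x y, |f x - f y| ≤ c * ‖x - y‖ ^ γ) : Continuous f := by
  refine continuous_iff_continuousAt.mpr fun x => ?_
  have key : Tendsto (fun y : E => c * ‖y - x‖ ^ γ) (nhds x) (nhds 0) := by
    have h1 : Tendsto (fun y : E => ‖y - x‖) (nhds x) (nhds 0) := by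
      simpa using ((continuous_id.sub (continuous_const : Continuous fun _ : E => x)).norm).tendsto x
    have h2 : ContinuousAt (fun t : ℝ => t ^ γ) 0 :=
      Real.continuousAt_rpow_const 0 γ (Or.inr hγ.le)
    have h3 := h2.tendsto.comp h1
    rw [Real.zero_rpow hγ.ne'] at h3
    simpa using h3.const_mul c
  rw [ContinuousAt, tendsto_iff_dist_tendsto_zero]
  refine squeeze_zero (fun y => dist_nonneg) (fun y => ?_) key
  rw [Real.dist_eq]
  exact h y x

/-- Lipschitz estimate for f ↦ F(K*f) in the Hölder–Zygmund norm
with constant depending on the L¹ norm of f+g. -/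
theorem stmt4 {d : ℕ} (γ : ℝ) (hγ : γ ∈ Set.Ioo (0:ℝ) 1)
    (K : Euc d → ℝ) (hK0 : ∀ x, 0 ≤ K x) (hKint : Integrable K)
    (hK1 : (∫ x, K x) = 1) (hKH : IsHolderBdd γ K)
    (F : ℝ → ℝ) (hF : ContDiff ℝ 1 F) (M : ℝ) (hM : ∀ x, |deriv F x| ≤ M)
    (L : NNReal) (hL : LipschitzWith L (deriv F)) :
    ∃ C > 0, ∀ f g : Euc d → ℝ,
      IsHolderBdd γ f → IsHolderBdd γ g → Integrable f → Integrable g →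
      cNorm γ (fun x => F (∫ z, K (x - z) * f z) - F (∫ z, K (x - z) * g z)) ≤
        C * (1 + ∫ x, |f x + g x|) * cNorm γ (fun x => f x - g x) := by
  obtain ⟨hγ0, -⟩ := hγ
  have hM0 : 0 ≤ M := le_trans (abs_nonneg _) (hM 0)
  have hL0 : (0:ℝ) ≤ (L:ℝ) := L.coe_nonneg
  have hKc : Continuous K := cont_of_holder hγ0 (holder_pt hγ0 hKH.2)
  have hKh0 : 0 ≤ holdS γ K := holds_nonneg hKH.2
  have hKsup : ∀ x, |K x| ≤ supN K := fun x => le_ciSup hKH.1 x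
  have hFd : Differentiable ℝ F := hF.differentiable one_ne_zero
  have hFlip : ∀ a b : ℝ, |F a - F b| ≤ M * |a - b| := by
    have hl : LipschitzWith (NNReal.mk M hM0) F := by
      refine lipschitzWith_of_nnnorm_deriv_le hFd fun x => ?_
      rw [← NNReal.coe_le_coe, coe_nnnorm, Real.norm_eq_abs, NNReal.coe_mk]
      exact hM x
    intro a b
    have := hl.dist_le_mul a b
    simpa [Real.dist_eq, NNReal.coe_mk] using this
  have hL' : ∀ a b : ℝ, |deriv F a - deriv F b| ≤ L * |a - b| := by
    intro a b
    have := hL.dist_le_mul a b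
    simpa [Real.dist_eq] using this
  have keyG : ∀ a b s : ℝ,
      |(F (a + s) - F (a - s)) - (F (b + s) - F (b - s))| ≤ 2 * L * |s| * |a - b| := by
    intro a b s
    have hd : ∀ τ : ℝ, HasDerivAt (fun τ : ℝ => F (τ + s) - F (τ - s))
        (deriv F (τ + s) - deriv F (τ - s)) τ := by
      intro τ
      have h1 : HasDerivAt (fun τ : ℝ => F (τ + s)) (deriv F (τ + s)) τ := by
        simpa [Function.comp_def] using (hFd (τ + s)).hasDerivAt.comp τ ((hasDerivAt_id τ).add_const s)
      have h2 : HasDerivAt (fun τ : ℝ => F (τ - s)) (deriv F (τ - s)) τ := by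
        simpa [Function.comp_def] using (hFd (τ - s)).hasDerivAt.comp τ ((hasDerivAt_id τ).sub_const s)
      exact h1.sub h2
    have hlip : LipschitzWith (NNReal.mk (2 * L * |s|) (by positivity)) (fun τ : ℝ => F (τ + s) - F (τ - s)) := by
      refine lipschitzWith_of_nnnorm_deriv_le (fun τ => (hd τ).differentiableAt) fun τ => ?_
      rw [← NNReal.coe_le_coe, coe_nnnorm, Real.norm_eq_abs, NNReal.coe_mk, (hd τ).deriv]
      calc |deriv F (τ + s) - deriv F (τ - s)| ≤ L * |(τ + s) - (τ - s)| := hL' _ _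
        _ = 2 * L * |s| := by
            rw [show (τ + s) - (τ - s) = 2 * s by ring, abs_mul]
            rw [show |(2:ℝ)| = 2 by norm_num]; ring
    have h := hlip.dist_le_mul a b
    simpa only [Real.dist_eq, NNReal.coe_mk] using h
  refine ⟨M + L * holdS γ K + 1, by positivity, ?_⟩
  intro f g hfH hgH hfint hgint
  -- continuity
  have hfc : Continuous f := cont_of_holder hγ0 (holder_pt hγ0 hfH.2)
  have hgc : Continuous g := cont_of_holder hγ0 (holder_pt hγ0 hgH.2)
  have hfgc : Continuous (fun x : Euc d => f x - g x) := hfc.sub hgc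
  have hfpc : Continuous (fun x : Euc d => f x + g x) := hfc.add hgc
  have hfgint : Integrable (fun x : Euc d => f x - g x) := hfint.sub hgint
  have hfpint : Integrable (fun x : Euc d => f x + g x) := hfint.add hgint
  -- bounds for f - g
  have hfsup : ∀ x, |f x| ≤ supN f := fun x => le_ciSup hfH.1 x
  have hgsup : ∀ x, |g x| ≤ supN g := fun x => le_ciSup hgH.1 x
  have hfgb : ∀ x, |f x - g x| ≤ supN f + supN g := fun x =>
    (abs_sub _ _).trans (add_le_add (hfsup x) (hgsup x))
  have hSb : BddAbove (Set.range fun x : Euc d => |f x - g x|) :=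
    ⟨supN f + supN g, by rintro _ ⟨x, rfl⟩; exact hfgb x⟩
  have hS : ∀ x, |f x - g x| ≤ supN (fun x : Euc d => f x - g x) := fun x => le_ciSup hSb x
  have hS0 : 0 ≤ supN (fun x : Euc d => f x - g x) :=
    le_trans (abs_nonneg _) (hS (Classical.arbitrary _))
  have hfgpt : ∀ x y : Euc d, |(f x - g x) - (f y - g y)| ≤
      (holdS γ f + holdS γ g) * ‖x - y‖ ^ γ := by
    intro x y
    calc |(f x - g x) - (f y - g y)| = |(f x - f y) - (g x - g y)| := by ring_nf
      _ ≤ |f x - f y| + |g x - g y| := abs_sub _ _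
      _ ≤ holdS γ f * ‖x - y‖ ^ γ + holdS γ g * ‖x - y‖ ^ γ :=
          add_le_add (holder_pt hγ0 hfH.2 x y) (holder_pt hγ0 hgH.2 x y)
      _ = (holdS γ f + holdS γ g) * ‖x - y‖ ^ γ := by ring
  have hHb : BddAbove (Set.range fun p : Euc d × Euc d =>
      |(f p.1 - g p.1) - (f p.2 - g p.2)| / ‖p.1 - p.2‖ ^ γ) := by
    refine ⟨holdS γ f + holdS γ g, ?_⟩
    rintro _ ⟨⟨x, y⟩, rfl⟩
    exact aux_div_le (abs_nonneg _)
      (add_nonneg (holds_nonneg hfH.2) (holds_nonneg hgH.2))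
      (Real.rpow_nonneg (norm_nonneg _) _) (hfgpt x y)
  have hH : ∀ x y : Euc d, |(f x - g x) - (f y - g y)| ≤
      holdS γ (fun x : Euc d => f x - g x) * ‖x - y‖ ^ γ := holder_pt hγ0 hHb
  have hH0 : 0 ≤ holdS γ (fun x : Euc d => f x - g x) := holds_nonneg hHb
  have hI0 : 0 ≤ ∫ x, |f x + g x| := integral_nonneg fun x => abs_nonneg _
  -- integrability of convolution integrands
  have hmK : ∀ x : Euc d, AEStronglyMeasurable (fun z => K (x - z)) volume := fun x =>
    (hKc.comp (continuous_const.sub continuous_id)).aestronglyMeasurable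
  have hintKf : ∀ (φ : Euc d → ℝ), Integrable φ →
      ∀ x : Euc d, Integrable (fun z => K (x - z) * φ z) := fun φ hφ x =>
    hφ.bdd_mul (hmK x) (c := supN K) (Eventually.of_forall fun z => by rw [Real.norm_eq_abs]; exact hKsup _)
  -- (i) sup bound on u - v
  have hsub : ∀ x : Euc d, (∫ z, K (x - z) * f z) - ∫ z, K (x - z) * g z
      = ∫ z, K (x - z) * (f z - g z) := by
    intro x
    rw [← integral_sub (hintKf f hfint x) (hintKf g hgint x)]
    congr 1; funext z; ring
  have hadd : ∀ x : Euc d, (∫ z, K (x - z) * f z) + ∫ z, K (x - z) * g z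
      = ∫ z, K (x - z) * (f z + g z) := by
    intro x
    rw [← integral_add (hintKf f hfint x) (hintKf g hgint x)]
    congr 1; funext z; ring
  have hd1 : ∀ x : Euc d, |(∫ z, K (x - z) * f z) - ∫ z, K (x - z) * g z| ≤
      supN (fun x : Euc d => f x - g x) := by
    intro x
    rw [hsub x]
    calc |∫ z, K (x - z) * (f z - g z)| ≤ ∫ z, |K (x - z) * (f z - g z)| := by
          simpa only [Real.norm_eq_abs] using
            norm_integral_le_integral_norm (fun z => K (x - z) * (f z - g z))
      _ ≤ ∫ z, K (x - z) * supN (fun x : Euc d => f x - g x) := by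
          refine integral_mono (hintKf _ hfgint x).abs
            ((hKint.comp_sub_left x).mul_const _) fun z => ?_
          rw [abs_mul, abs_of_nonneg (hK0 _)]
          exact mul_le_mul_of_nonneg_left (hS z) (hK0 _)
      _ = supN (fun x : Euc d => f x - g x) := by
          rw [integral_mul_const, integral_sub_left_eq_self K volume x, hK1, one_mul]
  -- (ii) Hölder bound on u - v
  have cov : ∀ x : Euc d, (∫ z, K (x - z) * (f z - g z)) = ∫ z, K z * (f (x - z) - g (x - z)) := by
    intro x
    have h := integral_sub_left_eq_self (fun z => K (x - z) * (f z - g z)) volume x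
    simp only [sub_sub_cancel] at h
    exact h.symm
  have hKfgx_int : ∀ x : Euc d, Integrable (fun z => K z * (f (x - z) - g (x - z))) := by
    intro x
    have hc : Continuous fun z : Euc d => f (x - z) - g (x - z) :=
      hfgc.comp (continuous_const.sub continuous_id)
    have h := hKint.bdd_mul (f := fun z : Euc d => f (x - z) - g (x - z))
      hc.aestronglyMeasurable
      (c := supN (fun x : Euc d => f x - g x)) (Eventually.of_forall fun z => by rw [Real.norm_eq_abs]; exact hS _)
    simpa [mul_comm] using h
  have hd2 : ∀ x y : Euc d,
      |((∫ z, K (x - z) * f z) - ∫ z, K (x - z) * g z) -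
        ((∫ z, K (y - z) * f z) - ∫ z, K (y - z) * g z)| ≤
      holdS γ (fun x : Euc d => f x - g x) * ‖x - y‖ ^ γ := by
    intro x y
    rw [hsub x, hsub y, cov x, cov y, ← integral_sub (hKfgx_int x) (hKfgx_int y)]
    calc |∫ z, (K z * (f (x - z) - g (x - z)) - K z * (f (y - z) - g (y - z)))|
        ≤ ∫ z, |K z * (f (x - z) - g (x - z)) - K z * (f (y - z) - g (y - z))| := by
          simpa only [Real.norm_eq_abs] using norm_integral_le_integral_norm
            (fun z => K z * (f (x - z) - g (x - z)) - K z * (f (y - z) - g (y - z)))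
      _ ≤ ∫ z, K z * (holdS γ (fun x : Euc d => f x - g x) * ‖x - y‖ ^ γ) := by
          refine integral_mono ((hKfgx_int x).sub (hKfgx_int y)).abs
            (hKint.mul_const _) fun z => ?_
          rw [← mul_sub, abs_mul, abs_of_nonneg (hK0 z)]
          refine mul_le_mul_of_nonneg_left ?_ (hK0 z)
          have h := hH (x - z) (y - z)
          simpa [sub_sub_sub_cancel_right] using h
      _ = holdS γ (fun x : Euc d => f x - g x) * ‖x - y‖ ^ γ := by
          rw [integral_mul_const, hK1, one_mul]
  -- (iii) Hölder bound on u + v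
  have hd3 : ∀ x y : Euc d,
      |((∫ z, K (x - z) * f z) + ∫ z, K (x - z) * g z) -
        ((∫ z, K (y - z) * f z) + ∫ z, K (y - z) * g z)| ≤
      holdS γ K * (∫ x, |f x + g x|) * ‖x - y‖ ^ γ := by
    intro x y
    rw [hadd x, hadd y, ← integral_sub (hintKf _ hfpint x) (hintKf _ hfpint y)]
    calc |∫ z, (K (x - z) * (f z + g z) - K (y - z) * (f z + g z))|
        ≤ ∫ z, |K (x - z) * (f z + g z) - K (y - z) * (f z + g z)| := by
          simpa only [Real.norm_eq_abs] using norm_integral_le_integral_norm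
            (fun z => K (x - z) * (f z + g z) - K (y - z) * (f z + g z))
      _ ≤ ∫ z, |f z + g z| * (holdS γ K * ‖x - y‖ ^ γ) := by
          refine integral_mono ((hintKf _ hfpint x).sub (hintKf _ hfpint y)).abs
            (hfpint.abs.mul_const _) fun z => ?_
          rw [← sub_mul, abs_mul, mul_comm]
          refine mul_le_mul_of_nonneg_left ?_ (abs_nonneg _)
          have h := holder_pt hγ0 hKH.2 (x - z) (y - z)
          simpa [sub_sub_sub_cancel_right] using h
      _ = holdS γ K * (∫ x, |f x + g x|) * ‖x - y‖ ^ γ := by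
          rw [integral_mul_const]; ring
  -- pointwise bounds on w
  have hw1 : ∀ x : Euc d,
      |F (∫ z, K (x - z) * f z) - F (∫ z, K (x - z) * g z)| ≤
      M * supN (fun x : Euc d => f x - g x) := fun x =>
    (hFlip _ _).trans (mul_le_mul_of_nonneg_left (hd1 x) hM0)
  have hw2 : ∀ x y : Euc d,
      |(F (∫ z, K (x - z) * f z) - F (∫ z, K (x - z) * g z)) -
        (F (∫ z, K (y - z) * f z) - F (∫ z, K (y - z) * g z))| ≤
      (M * holdS γ (fun x : Euc d => f x - g x) +
        L * holdS γ K * supN (fun x : Euc d => f x - g x) * (∫ x, |f x + g x|) / 2) *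
        ‖x - y‖ ^ γ := by
    intro x y
    set ux := ∫ z, K (x - z) * f z with hux
    set vx := ∫ z, K (x - z) * g z with hvx
    set uy := ∫ z, K (y - z) * f z with huy
    set vy := ∫ z, K (y - z) * g z with hvy
    set a := (ux + vx) / 2 with ha
    set s := (ux - vx) / 2 with hs
    set b := (uy + vy) / 2 with hb
    set t := (uy - vy) / 2 with ht
    have eux : ux = a + s := by rw [ha, hs]; ring
    have evx : vx = a - s := by rw [ha, hs]; ring
    have euy : uy = b + t := by rw [hb, ht]; ring
    have evy : vy = b - t := by rw [hb, ht]; ring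
    have h_st : |s - t| ≤ holdS γ (fun x : Euc d => f x - g x) * ‖x - y‖ ^ γ / 2 := by
      have h := hd2 x y
      rw [hs, ht]
      rw [show (ux - vx) / 2 - (uy - vy) / 2 = ((ux - vx) - (uy - vy)) / 2 by ring, abs_div]
      rw [show |(2:ℝ)| = 2 by norm_num]
      linarith
    have h_t : |t| ≤ supN (fun x : Euc d => f x - g x) / 2 := by
      have h := hd1 y
      rw [ht, abs_div, show |(2:ℝ)| = 2 by norm_num]
      linarith
    have h_ab : |a - b| ≤ holdS γ K * (∫ x, |f x + g x|) * ‖x - y‖ ^ γ / 2 := by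
      have h := hd3 x y
      rw [ha, hb]
      rw [show (ux + vx) / 2 - (uy + vy) / 2 = ((ux + vx) - (uy + vy)) / 2 by ring, abs_div]
      rw [show |(2:ℝ)| = 2 by norm_num]
      linarith
    calc |(F ux - F vx) - (F uy - F vy)|
        = |(F (a + s) - F (a - s)) - (F (b + t) - F (b - t))| := by
          rw [eux, evx, euy, evy]
      _ ≤ |(F (a + s) - F (a - s)) - (F (a + t) - F (a - t))| +
          |(F (a + t) - F (a - t)) - (F (b + t) - F (b - t))| := abs_sub_le _ _ _
      _ ≤ (M * |s - t| + M * |s - t|) + 2 * L * |t| * |a - b| := by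
          refine add_le_add ?_ (keyG a b t)
          calc |(F (a + s) - F (a - s)) - (F (a + t) - F (a - t))|
              = |(F (a + s) - F (a + t)) - (F (a - s) - F (a - t))| := by ring_nf
            _ ≤ |F (a + s) - F (a + t)| + |F (a - s) - F (a - t)| := abs_sub _ _
            _ ≤ M * |s - t| + M * |s - t| := by
                refine add_le_add ((hFlip _ _).trans ?_) ((hFlip _ _).trans ?_)
                · refine mul_le_mul_of_nonneg_left (le_of_eq ?_) hM0
                  rw [show (a + s) - (a + t) = s - t by ring]
                · refine mul_le_mul_of_nonneg_left (le_of_eq ?_) hM0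
                  rw [show (a - s) - (a - t) = -(s - t) by ring, abs_neg]
      _ ≤ (M * holdS γ (fun x : Euc d => f x - g x) +
            L * holdS γ K * supN (fun x : Euc d => f x - g x) * (∫ x, |f x + g x|) / 2) *
            ‖x - y‖ ^ γ := by
          have hr0 : (0:ℝ) ≤ ‖x - y‖ ^ γ := Real.rpow_nonneg (norm_nonneg _) _
          have hmul : |t| * |a - b| ≤ (supN (fun x : Euc d => f x - g x) / 2) *
              (holdS γ K * (∫ x, |f x + g x|) * ‖x - y‖ ^ γ / 2) :=
            mul_le_mul h_t h_ab (abs_nonneg _) (by positivity)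
          nlinarith [mul_le_mul_of_nonneg_left h_st hM0, mul_le_mul_of_nonneg_left hmul hL0]
  -- assemble
  simp only [cNorm]
  have s1 : supN (fun x : Euc d => F (∫ z, K (x - z) * f z) - F (∫ z, K (x - z) * g z)) ≤
      M * supN (fun x : Euc d => f x - g x) := ciSup_le hw1
  have s2 : holdS γ (fun x : Euc d => F (∫ z, K (x - z) * f z) - F (∫ z, K (x - z) * g z)) ≤
      M * holdS γ (fun x : Euc d => f x - g x) +
        L * holdS γ K * supN (fun x : Euc d => f x - g x) * (∫ x, |f x + g x|) / 2 := by
    refine ciSup_le fun p => ?_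
    exact aux_div_le (abs_nonneg _) (by positivity)
      (Real.rpow_nonneg (norm_nonneg _) _) (hw2 p.1 p.2)
  have hB0 : 0 ≤ L * holdS γ K * supN (fun x : Euc d => f x - g x) * (∫ x, |f x + g x|) :=
    by positivity
  nlinarith [mul_nonneg hS0 hI0, mul_nonneg hH0 hI0,
    mul_nonneg (mul_nonneg hL0 hKh0) (mul_nonneg hS0 hI0),
    mul_nonneg (mul_nonneg hL0 hKh0) (mul_nonneg hH0 hI0),
    mul_nonneg (mul_nonneg hL0 hKh0) hS0, mul_nonneg (mul_nonneg hL0 hKh0) hH0,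
    mul_nonneg hM0 hI0, mul_nonneg (mul_nonneg hM0 hS0) hI0,
    mul_nonneg (mul_nonneg hM0 hH0) hI0, mul_nonneg hM0 hS0, mul_nonneg hM0 hH0]
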